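/- There do not exist polynomials h₁,...,h_n ∈ ℂ[z₁,...,z_n] such that 1 = Σᵢ₌₁ⁿ (∂hᵢ/∂zᵢ − 2 zᵢ hᵢ). -/

import Mathlib

open MvPolynomial Finsupp

noncomputable def mom : ℕ → ℂ
  | 0 => 1
  | 1 => 0
  | (k+2) => ((k+1 : ℂ)/2) * mom k

lemma mom_rec (k : ℕ) : (k : ℂ) * mom (k - 1) = 2 * mom (k + 1) := by
  cases k with
  | zero => simp [mom]
  | succ k =>
    show ((k+1 : ℕ) : ℂ) * mom k = 2 * mom (k + 2)
    rw [mom]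
    push_cast
    ring

noncomputable def Lfun (n : ℕ) : MvPolynomial (Fin n) ℂ →ₗ[ℂ] ℂ :=
  (basisMonomials (Fin n) ℂ).constr ℂ (fun d => ∏ j, mom (d j))

lemma Lfun_monomial {n : ℕ} (d : Fin n →₀ ℕ) (c : ℂ) :
    Lfun n (monomial d c) = c * ∏ j, mom (d j) := by
  have : monomial d c = c • (basisMonomials (Fin n) ℂ) d := by
    rw [coe_basisMonomials]; simp [smul_monomial]
  rw [this, map_smul, Lfun, Module.Basis.constr_basis, smul_eq_mul]

lemma Lfun_key {n : ℕ} (i : Fin n) (p : MvPolynomial (Fin n) ℂ) :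
    Lfun n (pderiv i p) = Lfun n (2 * X i * p) := by
  induction p using MvPolynomial.induction_on' with
  | monomial d c =>
    rw [pderiv_monomial, Lfun_monomial]
    have hX : (2 : MvPolynomial (Fin n) ℂ) * X i * monomial d c
        = monomial (Finsupp.single i 1 + d) (2 * c) := by
      have h2 : (2 : MvPolynomial (Fin n) ℂ) = C 2 := (map_ofNat C 2).symm
      rw [h2, X, mul_assoc, monomial_mul, C_mul_monomial, one_mul]
    rw [hX, Lfun_monomial]
    -- split products at j = i
    have him : i ∈ Finset.univ := Finset.mem_univ i
    rw [← Finset.mul_prod_erase _ _ him, ← Finset.mul_prod_erase _ _ him]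
    have he : ∀ j ∈ Finset.univ.erase i,
        mom ((d - Finsupp.single i 1 : Fin n →₀ ℕ) j) = mom ((Finsupp.single i 1 + d : Fin n →₀ ℕ) j) := by
      intro j hj
      have hji : j ≠ i := Finset.ne_of_mem_erase hj
      simp [Finsupp.single_apply, hji.symm, Finsupp.tsub_apply]
    rw [Finset.prod_congr rfl he]
    have h1 : (d - Finsupp.single i 1 : Fin n →₀ ℕ) i = d i - 1 := by
      simp [Finsupp.tsub_apply]
    have h2 : (Finsupp.single i 1 + d : Fin n →₀ ℕ) i = d i + 1 := by
      simp [add_comm]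
    rw [h1, h2]
    have := mom_rec (d i)
    push_cast
    calc c * (d i) * (mom (d i - 1) * ∏ j ∈ Finset.univ.erase i, mom ((Finsupp.single i 1 + d : Fin n →₀ ℕ) j))
        = ((d i : ℂ) * mom (d i - 1)) * (c * ∏ j ∈ Finset.univ.erase i, mom ((Finsupp.single i 1 + d : Fin n →₀ ℕ) j)) := by ring
      _ = (2 * mom (d i + 1)) * (c * ∏ j ∈ Finset.univ.erase i, mom ((Finsupp.single i 1 + d : Fin n →₀ ℕ) j)) := by rw [this]
      _ = 2 * c * (mom (d i + 1) * ∏ j ∈ Finset.univ.erase i, mom ((Finsupp.single i 1 + d : Fin n →₀ ℕ) j)) := by ring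
  | add p q hp hq =>
    rw [map_add, map_add, hp, hq, mul_add, map_add]

/-- the constant `1` is not in the image of the Hermite operators
`Λᵢ = ∂ᵢ - 2zᵢ` on `ℂ[z₁,...,zₙ]`. -/
theorem stmt19 {n : ℕ} :
    ¬ ∃ h : Fin n → MvPolynomial (Fin n) ℂ,
      (1 : MvPolynomial (Fin n) ℂ) = ∑ i, (pderiv i (h i) - 2 * X i * h i) := by
  rintro ⟨h, hh⟩
  have hL := congrArg (Lfun n) hh
  rw [map_sum] at hL
  have h1 : Lfun n 1 = 1 := by
    have : (1 : MvPolynomial (Fin n) ℂ) = monomial 0 1 := by simp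
    rw [this, Lfun_monomial]; simp [mom]
  have h0 : ∀ i, Lfun n (pderiv i (h i) - 2 * X i * h i) = 0 := by
    intro i
    rw [map_sub, Lfun_key i (h i), sub_self]
  rw [h1, Finset.sum_congr rfl (fun i _ => h0 i), Finset.sum_const_zero] at hL
  exact one_ne_zero hL
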